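/- Let p ∈ (0,1] ∪ [2,∞). For any measure space (X, 𝒜, μ) and any measurable f, g : X → [0,∞) with ∫ f^p dμ < ∞, ∫ g^p dμ < ∞ and ∫ f^p dμ + ∫ g^p dμ > 0, setting Γ := 2·∫ (fg)^{p/2} dμ / (∫ f^p dμ + ∫ g^p dμ), one has ∫ (f+g)^p dμ ≤ ( ((1+√(1−Γ²))/2)^{1/p} + ((1−√(1−Γ²))/2)^{1/p} )^p · (∫ f^p dμ + ∫ g^p dμ). -/

import Mathlib

open MeasureTheory Real Set
open scoped ENNReal

section Aux

/-- Ratio monotonicity of `sinh`. -/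
theorem aux_sinh_deriv (c x : ℝ) :
    HasDerivAt (fun t => Real.sinh (c * t)) (c * Real.cosh (c * x)) x := by
  have := (Real.hasDerivAt_sinh (c*x)).comp x ((hasDerivAt_id x).const_mul c)
  simpa [Function.comp_def, mul_comm] using this

theorem aux_cosh_deriv (c x : ℝ) :
    HasDerivAt (fun t => Real.cosh (c * t)) (c * Real.sinh (c * x)) x := by
  have := (Real.hasDerivAt_cosh (c*x)).comp x ((hasDerivAt_id x).const_mul c)
  simpa [Function.comp_def, mul_comm] using this

theorem aux_sinh_ratio {a b t : ℝ} (hb : 0 < b) (hab : b ≤ a) (ht : 0 ≤ t) :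
    a * Real.sinh (b * t) ≤ b * Real.sinh (a * t) := by
  have ha : 0 < a := hb.trans_le hab
  have h : MonotoneOn (fun t => b * Real.sinh (a * t) - a * Real.sinh (b * t)) (Set.Ici 0) := by
    apply monotoneOn_of_deriv_nonneg (convex_Ici 0)
    · fun_prop
    · intro x hx
      apply DifferentiableAt.differentiableWithinAt; fun_prop
    · intro x hx
      rw [interior_Ici, Set.mem_Ioi] at hx
      have h1 : HasDerivAt (fun t => b * Real.sinh (a * t) - a * Real.sinh (b * t))
          (b * (a * Real.cosh (a * x)) - a * (b * Real.cosh (b * x))) x :=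
        ((aux_sinh_deriv a x).const_mul b).sub ((aux_sinh_deriv b x).const_mul a)
      rw [h1.deriv]
      have hc : Real.cosh (b * x) ≤ Real.cosh (a * x) := by
        rw [Real.cosh_le_cosh, abs_of_nonneg (by positivity), abs_of_nonneg (by positivity)]
        nlinarith
      nlinarith [mul_nonneg (mul_nonneg ha.le hb.le) (sub_nonneg.2 hc)]
  have := h (Set.self_mem_Ici) (Set.mem_Ici.2 ht) ht
  simp only [mul_zero, Real.sinh_zero, sub_zero, sub_self] at this
  linarith

theorem aux_hp_pos {p : ℝ} (hp : p ∈ Set.Ioc (0:ℝ) 1 ∪ Set.Ici (2:ℝ)) : 0 < p := by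
  rcases hp with h | h
  · exact h.1
  · rw [Set.mem_Ici] at h; linarith

theorem aux_keyF {p : ℝ} (hp : p ∈ Set.Ioc (0:ℝ) 1 ∪ Set.Ici (2:ℝ)) {θ : ℝ} (hθ : 0 ≤ θ) :
    Real.sinh (p*θ) * (1 + p * Real.sinh θ ^ 2)
      ≤ p/2 * Real.sinh (2*θ) * Real.cosh (p*θ) := by
  have hid : p/2 * Real.sinh (2*θ) * Real.cosh (p*θ)
      - Real.sinh (p*θ) * (1 + p * Real.sinh θ ^ 2)
      = (p/2 - 1) * Real.sinh (p*θ) - p/2 * Real.sinh ((p-2)*θ) := by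
    have h1 : Real.sinh ((p-2)*θ)
        = Real.sinh (p*θ) * Real.cosh (2*θ) - Real.cosh (p*θ) * Real.sinh (2*θ) := by
      rw [show (p-2)*θ = p*θ - 2*θ by ring, Real.sinh_sub]
    have h2 : Real.cosh (2*θ) = 1 + 2 * Real.sinh θ ^ 2 := by
      rw [Real.cosh_two_mul, Real.cosh_sq]; ring
    rw [h1, h2]; ring
  have hkey : 0 ≤ (p/2 - 1) * Real.sinh (p*θ) - p/2 * Real.sinh ((p-2)*θ) := by
    rcases hp with hp | hp
    · obtain ⟨hp0, hp1⟩ := hp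
      have h := aux_sinh_ratio hp0 (by linarith : p ≤ 2 - p) hθ
      have : Real.sinh ((p-2)*θ) = - Real.sinh ((2-p)*θ) := by
        rw [show (p-2)*θ = -((2-p)*θ) by ring, Real.sinh_neg]
      nlinarith
    · rw [Set.mem_Ici] at hp
      rcases eq_or_lt_of_le hp with h2 | h2
      · simp [← h2]
      · have h := aux_sinh_ratio (by linarith : (0:ℝ) < p - 2) (by linarith : p - 2 ≤ p) hθ
        nlinarith
  linarith

theorem aux_M_antitone {p : ℝ} (hp : p ∈ Set.Ioc (0:ℝ) 1 ∪ Set.Ici (2:ℝ)) :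
    AntitoneOn (fun θ => Real.cosh θ ^ (p-1) * Real.sinh θ / Real.sinh (p*θ)) (Set.Ioi 0) := by
  have hp0 : 0 < p := aux_hp_pos hp
  have hNat : ∀ x : ℝ, ContinuousAt (fun θ : ℝ => Real.cosh θ ^ (p-1) * Real.sinh θ) x := by
    intro x
    exact ((Real.continuous_cosh.continuousAt).rpow_const
      (Or.inl (Real.cosh_pos x).ne')).mul Real.continuous_sinh.continuousAt
  apply antitoneOn_of_deriv_nonpos (convex_Ioi 0)
  · apply ContinuousOn.div
    · exact fun x _ => (hNat x).continuousWithinAt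
    · fun_prop
    · intro x hx
      rw [Set.mem_Ioi] at hx
      exact (Real.sinh_pos_iff.2 (by positivity)).ne'
  · rw [interior_Ioi]
    intro x hx
    rw [Set.mem_Ioi] at hx
    apply DifferentiableAt.differentiableWithinAt
    apply DifferentiableAt.div
    · exact (Real.differentiableAt_cosh.rpow_const
        (Or.inl (Real.cosh_pos x).ne')).mul Real.differentiableAt_sinh
    · fun_prop
    · exact (Real.sinh_pos_iff.2 (by positivity)).ne'
  · rw [interior_Ioi]
    intro x hx
    rw [Set.mem_Ioi] at hx
    have hD : Real.sinh (p*x) ≠ 0 := (Real.sinh_pos_iff.2 (by positivity)).ne'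
    have hN : HasDerivAt (fun θ => Real.cosh θ ^ (p-1) * Real.sinh θ)
        ((Real.sinh x * (p-1) * Real.cosh x ^ (p-1-1)) * Real.sinh x
          + Real.cosh x ^ (p-1) * Real.cosh x) x :=
      ((Real.hasDerivAt_cosh x).rpow_const (Or.inl (Real.cosh_pos x).ne')).mul
        (Real.hasDerivAt_sinh x)
    have hDd : HasDerivAt (fun θ => Real.sinh (p*θ)) (p * Real.cosh (p*x)) x :=
      aux_sinh_deriv p x
    have hM : HasDerivAt (fun θ => Real.cosh θ ^ (p-1) * Real.sinh θ / Real.sinh (p*θ)) _ x :=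
      hN.div hDd hD
    rw [hM.deriv]
    apply div_nonpos_of_nonpos_of_nonneg _ (sq_nonneg _)
    have hF := aux_keyF hp hx.le
    have hc := Real.cosh_pos x
    have hc2 : (0:ℝ) < Real.cosh x ^ (p-1-1) := Real.rpow_pos_of_pos hc _
    have e1 : Real.cosh x ^ (p-1) = Real.cosh x ^ (p-1-1) * Real.cosh x := by
      rw [← Real.rpow_add_one hc.ne' (p-1-1)]; ring_nf
    have hcosh2 : Real.cosh x ^ 2 = 1 + Real.sinh x ^ 2 := by
      rw [Real.cosh_sq]; ring
    have e3 : Real.cosh x * Real.cosh x = 1 + Real.sinh x ^ 2 := by nlinarith [hcosh2]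
    have key : (Real.sinh x * (p - 1) * Real.cosh x ^ (p - 1 - 1) * Real.sinh x
          + Real.cosh x ^ (p - 1) * Real.cosh x) * Real.sinh (p * x)
          - Real.cosh x ^ (p - 1) * Real.sinh x * (p * Real.cosh (p * x))
        = Real.cosh x ^ (p-1-1) * ((Real.sinh (p*x) * (1 + p * Real.sinh x^2))
          - p/2 * Real.sinh (2*x) * Real.cosh (p*x)) := by
      rw [e1, Real.sinh_two_mul]
      linear_combination (Real.cosh x ^ (p-1-1) * Real.sinh (p*x)) * e3
    rw [key]
    exact mul_nonpos_of_nonneg_of_nonpos hc2.le (by linarith)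

theorem aux_tangent {p : ℝ} (hp : p ∈ Set.Ioc (0:ℝ) 1 ∪ Set.Ici (2:ℝ)) {θ₀ : ℝ}
    (h0 : 0 < θ₀) (θ : ℝ) :
    2^p * Real.cosh θ ^ p
      ≤ (2^p * (Real.cosh θ₀ ^ (p-1) * Real.sinh θ₀ / Real.sinh (p*θ₀)))
        * (Real.cosh (p*θ) - Real.cosh (p*θ₀)) + 2^p * Real.cosh θ₀ ^ p := by
  have hp0 : 0 < p := aux_hp_pos hp
  set m : ℝ := 2^p * (Real.cosh θ₀ ^ (p-1) * Real.sinh θ₀ / Real.sinh (p*θ₀)) with hm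
  set G : ℝ → ℝ := fun θ => m * Real.cosh (p*θ) - 2^p * Real.cosh θ ^ p with hG
  have hderiv : ∀ x : ℝ, HasDerivAt G
      (m * (p * Real.sinh (p*x)) - 2^p * (Real.sinh x * p * Real.cosh x ^ (p-1))) x := by
    intro x
    apply HasDerivAt.sub
    · exact (aux_cosh_deriv p x).const_mul m
    · exact ((Real.hasDerivAt_cosh x).rpow_const (Or.inl (Real.cosh_pos x).ne')).const_mul _
  have hcontG : Continuous G := by
    apply Continuous.sub
    · fun_prop
    · apply Continuous.mul continuous_const
      exact continuous_iff_continuousAt.2 fun x =>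
        (Real.continuous_cosh.continuousAt).rpow_const (Or.inl (Real.cosh_pos x).ne')
  have hMant := aux_M_antitone hp
  have key : ∀ x : ℝ, 0 ≤ x → G θ₀ ≤ G x := by
    intro x hx
    rcases le_total θ₀ x with hcase | hcase
    · have hmono : MonotoneOn G (Set.Ici θ₀) := by
        apply monotoneOn_of_deriv_nonneg (convex_Ici θ₀) hcontG.continuousOn
          (fun y _ => (hderiv y).differentiableAt.differentiableWithinAt)
        intro y hy
        rw [interior_Ici, Set.mem_Ioi] at hy
        rw [(hderiv y).deriv]
        have hy0 : 0 < y := h0.trans hy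
        have hMle : Real.cosh y ^ (p-1) * Real.sinh y / Real.sinh (p*y)
            ≤ Real.cosh θ₀ ^ (p-1) * Real.sinh θ₀ / Real.sinh (p*θ₀) :=
          hMant (Set.mem_Ioi.2 h0) (Set.mem_Ioi.2 hy0) hy.le
        have hsy : 0 < Real.sinh (p*y) := Real.sinh_pos_iff.2 (by positivity)
        have h2p : (0:ℝ) < 2^p := Real.rpow_pos_of_pos two_pos p
        have := (div_le_iff₀ hsy).1 hMle
        have h3 : 2^p * (Real.cosh y ^ (p-1) * Real.sinh y) ≤ m * Real.sinh (p*y) := by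
          rw [hm]
          calc 2^p * (Real.cosh y ^ (p-1) * Real.sinh y)
              ≤ 2^p * (Real.cosh θ₀ ^ (p-1) * Real.sinh θ₀ / Real.sinh (p*θ₀)
                  * Real.sinh (p*y)) := by
                apply mul_le_mul_of_nonneg_left this h2p.le
            _ = 2^p * (Real.cosh θ₀ ^ (p-1) * Real.sinh θ₀ / Real.sinh (p*θ₀))
                  * Real.sinh (p*y) := by ring
        nlinarith
      exact hmono (Set.self_mem_Ici) (Set.mem_Ici.2 hcase) hcase
    · have hanti : AntitoneOn G (Set.Icc 0 θ₀) := by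
        apply antitoneOn_of_deriv_nonpos (convex_Icc 0 θ₀) hcontG.continuousOn
          (fun y _ => (hderiv y).differentiableAt.differentiableWithinAt)
        intro y hy
        rw [interior_Icc] at hy
        obtain ⟨hy1, hy2⟩ := hy
        rw [(hderiv y).deriv]
        have hMle : Real.cosh θ₀ ^ (p-1) * Real.sinh θ₀ / Real.sinh (p*θ₀)
            ≤ Real.cosh y ^ (p-1) * Real.sinh y / Real.sinh (p*y) :=
          hMant (Set.mem_Ioi.2 hy1) (Set.mem_Ioi.2 h0) hy2.le
        have hsy : 0 < Real.sinh (p*y) := Real.sinh_pos_iff.2 (by positivity)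
        have h2p : (0:ℝ) < 2^p := Real.rpow_pos_of_pos two_pos p
        have := (le_div_iff₀ hsy).1 hMle
        have h3 : m * Real.sinh (p*y) ≤ 2^p * (Real.cosh y ^ (p-1) * Real.sinh y) := by
          rw [hm]
          calc 2^p * (Real.cosh θ₀ ^ (p-1) * Real.sinh θ₀ / Real.sinh (p*θ₀))
                * Real.sinh (p*y)
              = 2^p * (Real.cosh θ₀ ^ (p-1) * Real.sinh θ₀ / Real.sinh (p*θ₀)
                  * Real.sinh (p*y)) := by ring
            _ ≤ 2^p * (Real.cosh y ^ (p-1) * Real.sinh y) := by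
                apply mul_le_mul_of_nonneg_left this h2p.le
        nlinarith
      exact hanti (Set.mem_Icc.2 ⟨hx, hcase⟩) (Set.mem_Icc.2 ⟨le_of_lt h0, le_refl _⟩) hcase
  have hGθ : G θ₀ ≤ G θ := by
    rcases le_total 0 θ with h | h
    · exact key θ h
    · have : G θ = G (-θ) := by
        simp only [hG]
        rw [Real.cosh_neg, show p * -θ = -(p*θ) by ring, Real.cosh_neg]
      rw [this]
      exact key (-θ) (by linarith)
  simp only [hG] at hGθ
  linarith

theorem aux_twovar_pos {p : ℝ} (hp : p ∈ Set.Ioc (0:ℝ) 1 ∪ Set.Ici (2:ℝ)) {θ₀ : ℝ}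
    (h0 : 0 < θ₀) {x y : ℝ} (hx : 0 < x) (hy : 0 < y) :
    (x+y)^p ≤ (2^p * (Real.cosh θ₀ ^ (p-1) * Real.sinh θ₀ / Real.sinh (p*θ₀)))/2 * (x^p + y^p)
      + (2^p * Real.cosh θ₀ ^ p
          - (2^p * (Real.cosh θ₀ ^ (p-1) * Real.sinh θ₀ / Real.sinh (p*θ₀)))
            * Real.cosh (p*θ₀)) * (x*y)^(p/2) := by
  have hp0 : 0 < p := aux_hp_pos hp
  set m : ℝ := 2^p * (Real.cosh θ₀ ^ (p-1) * Real.sinh θ₀ / Real.sinh (p*θ₀)) with hm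
  set θ : ℝ := (Real.log x - Real.log y)/2 with hθ
  set s : ℝ := (Real.log x + Real.log y)/2 with hs
  have hxe : x = Real.exp (s+θ) := by
    rw [hθ, hs, show (Real.log x + Real.log y)/2 + (Real.log x - Real.log y)/2 = Real.log x
      by ring, Real.exp_log hx]
  have hye : y = Real.exp (s-θ) := by
    rw [hθ, hs, show (Real.log x + Real.log y)/2 - (Real.log x - Real.log y)/2 = Real.log y
      by ring, Real.exp_log hy]
  have e2 : (x+y)^p = Real.exp (s*p) * (2^p * Real.cosh θ ^ p) := by
    have e1 : x + y = Real.exp s * (2 * Real.cosh θ) := by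
      rw [hxe, hye, Real.cosh_eq, sub_eq_add_neg s θ, Real.exp_add, Real.exp_add]; ring
    rw [e1, Real.mul_rpow (Real.exp_pos s).le (by positivity),
      Real.mul_rpow (by norm_num) (Real.cosh_pos θ).le, ← Real.exp_mul]
  have e3 : x^p + y^p = Real.exp (s*p) * (2 * Real.cosh (p*θ)) := by
    rw [hxe, hye, ← Real.exp_mul, ← Real.exp_mul, Real.cosh_eq]
    rw [show (s+θ)*p = s*p + p*θ by ring, show (s-θ)*p = s*p + -(p*θ) by ring,
      Real.exp_add, Real.exp_add]
    ring
  have e4 : (x*y)^(p/2) = Real.exp (s*p) := by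
    rw [hxe, hye, ← Real.exp_add, ← Real.exp_mul,
      show (s+θ+(s-θ))*(p/2) = s*p by ring]
  have ht := aux_tangent hp h0 θ
  have hmul := mul_le_mul_of_nonneg_left ht (Real.exp_pos (s*p)).le
  rw [e2, e3, e4]
  rw [← hm] at hmul
  nlinarith [hmul]

theorem aux_half_m_ge_one {p : ℝ} (hp : p ∈ Set.Ioc (0:ℝ) 1 ∪ Set.Ici (2:ℝ)) {θ₀ : ℝ}
    (h0 : 0 < θ₀) :
    1 ≤ (2^p * (Real.cosh θ₀ ^ (p-1) * Real.sinh θ₀ / Real.sinh (p*θ₀)))/2 := by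
  have hp0 : 0 < p := aux_hp_pos hp
  set A : ℝ := 2^p * (Real.cosh θ₀ ^ (p-1) * Real.sinh θ₀ / Real.sinh (p*θ₀)) with hA
  set B : ℝ := 2^p * Real.cosh θ₀ ^ p - A * Real.cosh (p*θ₀) with hB
  have h1 : Filter.Tendsto (fun t : ℝ => t^p) (nhdsWithin 0 (Set.Ioi 0)) (nhds 0) := by
    have := (Real.continuousAt_rpow_const 0 p (Or.inr hp0.le)).tendsto
    rw [Real.zero_rpow hp0.ne'] at this
    exact this.mono_left nhdsWithin_le_nhds
  have h2 : Filter.Tendsto (fun t : ℝ => t^(p/2)) (nhdsWithin 0 (Set.Ioi 0)) (nhds 0) := by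
    have := (Real.continuousAt_rpow_const 0 (p/2) (Or.inr (by positivity))).tendsto
    rw [Real.zero_rpow (by positivity)] at this
    exact this.mono_left nhdsWithin_le_nhds
  have hlhs : Filter.Tendsto (fun t : ℝ => (1+t)^p) (nhdsWithin 0 (Set.Ioi 0)) (nhds 1) := by
    have hc : ContinuousAt (fun z : ℝ => (1+z)^p) 0 := by
      apply ContinuousAt.rpow_const
      · fun_prop
      · left; norm_num
    have := hc.tendsto.mono_left (nhdsWithin_le_nhds (s := Set.Ioi (0:ℝ)))
    simpa using this
  have hrhs : Filter.Tendsto (fun t : ℝ => A/2 * (1^p + t^p) + B * (1*t)^(p/2))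
      (nhdsWithin 0 (Set.Ioi 0)) (nhds (A/2)) := by
    have h2' : Filter.Tendsto (fun t : ℝ => (1*t)^(p/2)) (nhdsWithin 0 (Set.Ioi 0)) (nhds 0) := by
      simpa [one_mul] using h2
    have step : Filter.Tendsto (fun t : ℝ => A/2 * ((1:ℝ)^p + t^p) + B * (1*t)^(p/2))
        (nhdsWithin 0 (Set.Ioi 0)) (nhds (A/2 * ((1:ℝ)^p + 0) + B * 0)) :=
      (Filter.Tendsto.mul tendsto_const_nhds (Filter.Tendsto.add tendsto_const_nhds h1)).add
        (Filter.Tendsto.mul tendsto_const_nhds h2')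
    have : A/2 * ((1:ℝ)^p + 0) + B * 0 = A/2 := by rw [Real.one_rpow]; ring
    rwa [this] at step
  have hev : ∀ᶠ t in nhdsWithin (0:ℝ) (Set.Ioi 0),
      (1+t)^p ≤ A/2 * (1^p + t^p) + B * (1*t)^(p/2) :=
    eventually_nhdsWithin_of_forall fun t ht => aux_twovar_pos hp h0 one_pos ht
  exact le_of_tendsto_of_tendsto hlhs hrhs hev

theorem aux_twovar {p : ℝ} (hp : p ∈ Set.Ioc (0:ℝ) 1 ∪ Set.Ici (2:ℝ)) {θ₀ : ℝ}
    (h0 : 0 < θ₀) {x y : ℝ} (hx : 0 ≤ x) (hy : 0 ≤ y) :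
    (x+y)^p ≤ (2^p * (Real.cosh θ₀ ^ (p-1) * Real.sinh θ₀ / Real.sinh (p*θ₀)))/2 * (x^p + y^p)
      + (2^p * Real.cosh θ₀ ^ p
          - (2^p * (Real.cosh θ₀ ^ (p-1) * Real.sinh θ₀ / Real.sinh (p*θ₀)))
            * Real.cosh (p*θ₀)) * (x*y)^(p/2) := by
  have hp0 : 0 < p := aux_hp_pos hp
  have hhalf := aux_half_m_ge_one hp h0
  rcases hx.eq_or_lt with hx0 | hx0
  · rcases hy.eq_or_lt with hy0 | hy0
    · rw [← hx0, ← hy0]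
      simp [Real.zero_rpow hp0.ne', Real.zero_rpow (show p/2 ≠ 0 by positivity)]
    · rw [← hx0]
      rw [zero_add, zero_mul, Real.zero_rpow (show p/2 ≠ 0 by positivity),
        Real.zero_rpow hp0.ne', mul_zero, add_zero, zero_add]
      nlinarith [Real.rpow_pos_of_pos hy0 p]
  · rcases hy.eq_or_lt with hy0 | hy0
    · rw [← hy0]
      rw [add_zero, mul_zero, Real.zero_rpow (show p/2 ≠ 0 by positivity),
        Real.zero_rpow hp0.ne', mul_zero, add_zero, add_zero]
      nlinarith [Real.rpow_pos_of_pos hx0 p]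
    · exact aux_twovar_pos hp h0 hx0 hy0

theorem aux_tangency {p : ℝ} (hp0 : 0 < p) {Γ : ℝ} (hΓ0 : 0 < Γ) (hΓ1 : Γ < 1) :
    ∃ θ₀ : ℝ, 0 < θ₀ ∧
      (2^p * (Real.cosh θ₀ ^ (p-1) * Real.sinh θ₀ / Real.sinh (p*θ₀)))/2
        + (2^p * Real.cosh θ₀ ^ p
            - (2^p * (Real.cosh θ₀ ^ (p-1) * Real.sinh θ₀ / Real.sinh (p*θ₀)))
              * Real.cosh (p*θ₀)) * (Γ/2)
      = (((1 + Real.sqrt (1 - Γ^2))/2)^(1/p) + ((1 - Real.sqrt (1 - Γ^2))/2)^(1/p))^p := by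
  set c : ℝ := Γ⁻¹ with hc
  have hc1 : 1 < c := (one_lt_inv_iff₀).2 ⟨hΓ0, hΓ1⟩
  set s0 : ℝ := Real.sqrt (c^2 - 1) with hs0
  have hs0nn : 0 ≤ s0 := Real.sqrt_nonneg _
  have hs0sq : s0^2 = c^2 - 1 := Real.sq_sqrt (by nlinarith)
  set z : ℝ := c + s0 with hz
  have hz1 : 1 < z := by nlinarith
  have hzpos : 0 < z := by linarith
  have hzinv : z⁻¹ = c - s0 := by
    apply inv_eq_of_mul_eq_one_right
    nlinarith
  set θ₀ : ℝ := Real.log z / p with hθ₀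
  have hlogz : 0 < Real.log z := Real.log_pos hz1
  have hθ₀pos : 0 < θ₀ := div_pos hlogz hp0
  have hpθ : p * θ₀ = Real.log z := by
    rw [hθ₀]; field_simp
  have hcoshp : Real.cosh (p*θ₀) = c := by
    rw [hpθ, Real.cosh_log hzpos, hzinv]; ring
  have hcΓ : c * Γ = 1 := by rw [hc]; field_simp
  set A : ℝ := 2^p * (Real.cosh θ₀ ^ (p-1) * Real.sinh θ₀ / Real.sinh (p*θ₀)) with hA
  have hLHS : A/2 + (2^p * Real.cosh θ₀ ^ p - A * Real.cosh (p*θ₀)) * (Γ/2)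
      = 2^p * Real.cosh θ₀ ^ p * Γ / 2 := by
    rw [hcoshp]
    linear_combination (-(A/2)) * hcΓ
  have hs : Real.sqrt (1 - Γ^2) = Γ * s0 := by
    have h1 : 1 - Γ^2 = Γ^2 * (c^2 - 1) := by
      rw [hc]; field_simp
    rw [h1, ← hs0sq, show Γ^2 * s0^2 = (Γ*s0)^2 by ring]
    exact Real.sqrt_sq (by positivity)
  have h1s : (1 + Real.sqrt (1 - Γ^2))/2 = (Γ/2) * z := by
    rw [hs, hz]
    linear_combination (-1/2) * hcΓ
  have h2s : (1 - Real.sqrt (1 - Γ^2))/2 = (Γ/2) * z⁻¹ := by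
    rw [hs, hzinv]
    linear_combination (-1/2) * hcΓ
  have hΓ2pos : (0:ℝ) < Γ/2 := by linarith
  have hz1p : z ^ (1/p) = Real.exp θ₀ := by
    rw [Real.rpow_def_of_pos hzpos, show Real.log z * (1/p) = θ₀ by rw [hθ₀]; ring]
  have hz2p : (z⁻¹) ^ (1/p) = Real.exp (-θ₀) := by
    rw [Real.rpow_def_of_pos (by positivity), Real.log_inv,
      show -Real.log z * (1/p) = -θ₀ by rw [hθ₀]; ring]
  have hsum : ((1 + Real.sqrt (1 - Γ^2))/2)^(1/p) + ((1 - Real.sqrt (1 - Γ^2))/2)^(1/p)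
      = (Γ/2)^(1/p) * (2 * Real.cosh θ₀) := by
    rw [h1s, h2s, Real.mul_rpow hΓ2pos.le hzpos.le,
      Real.mul_rpow hΓ2pos.le (by positivity), hz1p, hz2p, Real.cosh_eq]
    ring
  refine ⟨θ₀, hθ₀pos, ?_⟩
  rw [hLHS, hsum, Real.mul_rpow (by positivity) (by positivity),
    ← Real.rpow_mul hΓ2pos.le, one_div, inv_mul_cancel₀ hp0.ne', Real.rpow_one,
    Real.mul_rpow (by norm_num) (Real.cosh_pos θ₀).le]
  ring

theorem aux_enn_rpow_ofReal (x : ℝ≥0∞) (hx : x ≠ ∞) {q : ℝ} (hq : 0 ≤ q) :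
    x ^ q = ENNReal.ofReal (x.toReal ^ q) := by
  rw [ENNReal.toReal_rpow, ENNReal.ofReal_toReal (ENNReal.rpow_ne_top_of_nonneg hq hx)]

theorem aux_real_amgm {p a b : ℝ} (ha : 0 ≤ a) (hb : 0 ≤ b) :
    2*(a*b)^(p/2) ≤ a^p + b^p := by
  rw [Real.mul_rpow ha hb]
  have h1 : (a^(p/2))^2 = a^p := by
    rw [← Real.rpow_natCast (a^(p/2)) 2, ← Real.rpow_mul ha]; norm_num
  have h2 : (b^(p/2))^2 = b^p := by
    rw [← Real.rpow_natCast (b^(p/2)) 2, ← Real.rpow_mul hb]; norm_num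
  nlinarith [sq_nonneg (a^(p/2) - b^(p/2))]

theorem aux_doubling {p a b : ℝ} (ha : 0 ≤ a) (hb : 0 ≤ b) (hp0 : 0 < p) :
    (a+b)^p ≤ 2^p * (a^p + b^p) := by
  have key : ∀ u v : ℝ, 0 ≤ u → u ≤ v → (u+v)^p ≤ 2^p*(u^p+v^p) := by
    intro u v hu huv
    have hv : 0 ≤ v := hu.trans huv
    calc (u+v)^p ≤ (2*v)^p := by
          apply Real.rpow_le_rpow (by linarith) (by linarith) hp0.le
      _ = 2^p * v^p := Real.mul_rpow (by norm_num) hv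
      _ ≤ 2^p * (u^p+v^p) := by
          have := Real.rpow_nonneg hu p
          nlinarith [Real.rpow_pos_of_pos (show (0:ℝ) < 2 by norm_num) p]
  rcases le_total a b with h | h
  · exact key a b ha h
  · have := key b a hb h
    calc (a+b)^p = (b+a)^p := by rw [add_comm]
      _ ≤ 2^p*(b^p+a^p) := this
      _ = 2^p*(a^p+b^p) := by ring

end Aux

section MeasureAux
variable {X : Type*} [MeasurableSpace X] (μ : Measure X) {p : ℝ}
variable {f g : X → ℝ≥0∞}
variable (hf : Measurable f) (hg : Measurable g)
  (hffin : ∀ x, f x ≠ ∞) (hgfin : ∀ x, g x ≠ ∞)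

include hf hg hffin hgfin in
theorem aux_C_le_AB (hp0 : 0 < p) :
    2 * ∫⁻ x, (f x * g x) ^ (p/2) ∂μ ≤ (∫⁻ x, f x ^ p ∂μ) + ∫⁻ x, g x ^ p ∂μ := by
  have mC : Measurable fun x => (f x * g x) ^ (p/2) :=
    ENNReal.continuous_rpow_const.measurable.comp (hf.mul hg)
  have mfp : Measurable fun x => f x ^ p :=
    ENNReal.continuous_rpow_const.measurable.comp hf
  have pt : ∀ x, 2 * (f x * g x) ^ (p/2) ≤ f x ^ p + g x ^ p := by
    intro x
    have ha := ENNReal.toReal_nonneg (a := f x)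
    have hb := ENNReal.toReal_nonneg (a := g x)
    rw [aux_enn_rpow_ofReal (f x) (hffin x) hp0.le, aux_enn_rpow_ofReal (g x) (hgfin x) hp0.le,
      aux_enn_rpow_ofReal (f x * g x) (ENNReal.mul_ne_top (hffin x) (hgfin x)) (by positivity),
      ENNReal.toReal_mul, ← ENNReal.ofReal_add (by positivity) (by positivity),
      show (2:ℝ≥0∞) = ENNReal.ofReal 2 by simp,
      ← ENNReal.ofReal_mul (by norm_num)]
    exact ENNReal.ofReal_le_ofReal (aux_real_amgm ha hb)
  calc 2 * ∫⁻ x, (f x * g x) ^ (p/2) ∂μ = ∫⁻ x, 2 * (f x * g x) ^ (p/2) ∂μ :=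
        (lintegral_const_mul 2 mC).symm
    _ ≤ ∫⁻ x, (f x ^ p + g x ^ p) ∂μ := lintegral_mono pt
    _ = _ := lintegral_add_left mfp _

include hf hg hffin hgfin in
theorem aux_L_le (hp0 : 0 < p) :
    ∫⁻ x, (f x + g x) ^ p ∂μ
      ≤ ENNReal.ofReal (2^p) * ((∫⁻ x, f x ^ p ∂μ) + ∫⁻ x, g x ^ p ∂μ) := by
  have mfp : Measurable fun x => f x ^ p :=
    ENNReal.continuous_rpow_const.measurable.comp hf
  have pt : ∀ x, (f x + g x) ^ p ≤ ENNReal.ofReal (2^p) * (f x ^ p + g x ^ p) := by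
    intro x
    have ha := ENNReal.toReal_nonneg (a := f x)
    have hb := ENNReal.toReal_nonneg (a := g x)
    rw [aux_enn_rpow_ofReal (f x) (hffin x) hp0.le, aux_enn_rpow_ofReal (g x) (hgfin x) hp0.le,
      aux_enn_rpow_ofReal (f x + g x) (ENNReal.add_ne_top.2 ⟨hffin x, hgfin x⟩) hp0.le,
      ENNReal.toReal_add (hffin x) (hgfin x),
      ← ENNReal.ofReal_add (by positivity) (by positivity),
      ← ENNReal.ofReal_mul (by positivity)]
    exact ENNReal.ofReal_le_ofReal (aux_doubling ha hb hp0)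
  calc ∫⁻ x, (f x + g x) ^ p ∂μ ≤ ∫⁻ x, ENNReal.ofReal (2^p) * (f x ^ p + g x ^ p) ∂μ :=
        lintegral_mono pt
    _ = ENNReal.ofReal (2^p) * ∫⁻ x, (f x ^ p + g x ^ p) ∂μ :=
        lintegral_const_mul _ (mfp.add (ENNReal.continuous_rpow_const.measurable.comp hg))
    _ = _ := by rw [lintegral_add_left mfp]

include hf hg hffin hgfin in
theorem aux_integral_step (hp0 : 0 < p)
    (hfp : ∫⁻ x, f x ^ p ∂μ ≠ ∞) (hgp : ∫⁻ x, g x ^ p ∂μ ≠ ∞)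
    (hC : ∫⁻ x, (f x * g x) ^ (p/2) ∂μ ≠ ∞)
    (hL : ∫⁻ x, (f x + g x) ^ p ∂μ ≠ ∞)
    {a b : ℝ} (ha : 0 ≤ a)
    (hpt : ∀ u v : ℝ, 0 ≤ u → 0 ≤ v → (u+v)^p ≤ a*(u^p+v^p) + b*(u*v)^(p/2)) :
    (∫⁻ x, (f x + g x) ^ p ∂μ).toReal
      ≤ a * ((∫⁻ x, f x ^ p ∂μ).toReal + (∫⁻ x, g x ^ p ∂μ).toReal)
        + b * (∫⁻ x, (f x * g x) ^ (p/2) ∂μ).toReal := by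
  have mfp : Measurable fun x => f x ^ p := ENNReal.continuous_rpow_const.measurable.comp hf
  have mgp : Measurable fun x => g x ^ p := ENNReal.continuous_rpow_const.measurable.comp hg
  have mC : Measurable fun x => (f x * g x) ^ (p/2) :=
    ENNReal.continuous_rpow_const.measurable.comp (hf.mul hg)
  have mL : Measurable fun x => (f x + g x) ^ p :=
    ENNReal.continuous_rpow_const.measurable.comp (hf.add hg)
  set A := ∫⁻ x, f x ^ p ∂μ
  set B := ∫⁻ x, g x ^ p ∂μ
  set C := ∫⁻ x, (f x * g x) ^ (p/2) ∂μ
  set L := ∫⁻ x, (f x + g x) ^ p ∂μ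
  rcases le_or_gt 0 b with hb | hb
  · have pt : ∀ x, (f x + g x)^p
        ≤ ENNReal.ofReal a * (f x ^p + g x ^p) + ENNReal.ofReal b * (f x * g x)^(p/2) := by
      intro x
      rw [aux_enn_rpow_ofReal (f x) (hffin x) hp0.le,
        aux_enn_rpow_ofReal (g x) (hgfin x) hp0.le,
        aux_enn_rpow_ofReal (f x + g x) (ENNReal.add_ne_top.2 ⟨hffin x, hgfin x⟩) hp0.le,
        aux_enn_rpow_ofReal (f x * g x) (ENNReal.mul_ne_top (hffin x) (hgfin x)) (by positivity),
        ENNReal.toReal_add (hffin x) (hgfin x), ENNReal.toReal_mul,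
        ← ENNReal.ofReal_add (by positivity) (by positivity),
        ← ENNReal.ofReal_mul ha, ← ENNReal.ofReal_mul hb,
        ← ENNReal.ofReal_add (by positivity) (by positivity)]
      exact ENNReal.ofReal_le_ofReal
        (hpt _ _ ENNReal.toReal_nonneg ENNReal.toReal_nonneg)
    have hint : L ≤ ENNReal.ofReal a * (A + B) + ENNReal.ofReal b * C := by
      calc L ≤ ∫⁻ x, (ENNReal.ofReal a * (f x ^p + g x ^p)
            + ENNReal.ofReal b * (f x * g x)^(p/2)) ∂μ := lintegral_mono pt
        _ = ENNReal.ofReal a * (A + B) + ENNReal.ofReal b * C := by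
            rw [lintegral_add_left ((show Measurable fun x => f x ^ p + g x ^ p from mfp.add mgp).const_mul _),
              lintegral_const_mul _ (show Measurable fun x => f x ^ p + g x ^ p from mfp.add mgp), lintegral_const_mul _ mC,
              lintegral_add_left mfp]
    have hfin : ENNReal.ofReal a * (A + B) + ENNReal.ofReal b * C ≠ ∞ := by
      apply ENNReal.add_ne_top.2
      constructor
      · exact ENNReal.mul_ne_top ENNReal.ofReal_ne_top (ENNReal.add_ne_top.2 ⟨hfp, hgp⟩)
      · exact ENNReal.mul_ne_top ENNReal.ofReal_ne_top hC
    have := ENNReal.toReal_mono hfin hint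
    rwa [ENNReal.toReal_add (ENNReal.mul_ne_top ENNReal.ofReal_ne_top
        (ENNReal.add_ne_top.2 ⟨hfp, hgp⟩)) (ENNReal.mul_ne_top ENNReal.ofReal_ne_top hC),
      ENNReal.toReal_mul, ENNReal.toReal_mul, ENNReal.toReal_ofReal ha,
      ENNReal.toReal_ofReal hb, ENNReal.toReal_add hfp hgp] at this
  · have hbn : 0 ≤ -b := by linarith
    have pt : ∀ x, (f x + g x)^p + ENNReal.ofReal (-b) * (f x * g x)^(p/2)
        ≤ ENNReal.ofReal a * (f x ^p + g x ^p) := by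
      intro x
      rw [aux_enn_rpow_ofReal (f x) (hffin x) hp0.le,
        aux_enn_rpow_ofReal (g x) (hgfin x) hp0.le,
        aux_enn_rpow_ofReal (f x + g x) (ENNReal.add_ne_top.2 ⟨hffin x, hgfin x⟩) hp0.le,
        aux_enn_rpow_ofReal (f x * g x) (ENNReal.mul_ne_top (hffin x) (hgfin x)) (by positivity),
        ENNReal.toReal_add (hffin x) (hgfin x), ENNReal.toReal_mul,
        ← ENNReal.ofReal_add (by positivity) (by positivity),
        ← ENNReal.ofReal_mul ha, ← ENNReal.ofReal_mul hbn,
        ← ENNReal.ofReal_add (by positivity) (by positivity)]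
      apply ENNReal.ofReal_le_ofReal
      have := hpt ((f x).toReal) ((g x).toReal) ENNReal.toReal_nonneg ENNReal.toReal_nonneg
      linarith
    have hint : L + ENNReal.ofReal (-b) * C ≤ ENNReal.ofReal a * (A + B) := by
      calc L + ENNReal.ofReal (-b) * C
          = ∫⁻ x, ((f x + g x)^p + ENNReal.ofReal (-b) * (f x * g x)^(p/2)) ∂μ := by
            rw [lintegral_add_left mL, lintegral_const_mul _ mC]
        _ ≤ ∫⁻ x, ENNReal.ofReal a * (f x ^p + g x ^p) ∂μ := lintegral_mono pt
        _ = ENNReal.ofReal a * (A + B) := by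
            rw [lintegral_const_mul _ (show Measurable fun x => f x ^ p + g x ^ p from mfp.add mgp), lintegral_add_left mfp]
    have := ENNReal.toReal_mono (ENNReal.mul_ne_top ENNReal.ofReal_ne_top
      (ENNReal.add_ne_top.2 ⟨hfp, hgp⟩)) hint
    rw [ENNReal.toReal_add hL (ENNReal.mul_ne_top ENNReal.ofReal_ne_top hC),
      ENNReal.toReal_mul, ENNReal.toReal_mul, ENNReal.toReal_ofReal ha,
      ENNReal.toReal_ofReal hbn, ENNReal.toReal_add hfp hgp] at this
    linarith

include hf hg in
theorem aux_case_zero (hp0 : 0 < p)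
    (hC0 : ∫⁻ x, (f x * g x) ^ (p/2) ∂μ = 0) :
    ∫⁻ x, (f x + g x) ^ p ∂μ = (∫⁻ x, f x ^ p ∂μ) + ∫⁻ x, g x ^ p ∂μ := by
  have mfp : Measurable fun x => f x ^ p := ENNReal.continuous_rpow_const.measurable.comp hf
  have mC : Measurable fun x => (f x * g x) ^ (p/2) :=
    ENNReal.continuous_rpow_const.measurable.comp (hf.mul hg)
  have hae : ∀ᵐ x ∂μ, (f x * g x) ^ (p/2) = 0 := (lintegral_eq_zero_iff mC).1 hC0
  have hae2 : ∀ᵐ x ∂μ, (f x + g x)^p = f x ^ p + g x ^ p := by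
    filter_upwards [hae] with x hx
    have : f x * g x = 0 := by
      rcases (ENNReal.rpow_eq_zero_iff).1 hx with ⟨h, _⟩ | ⟨h, hneg⟩
      · exact h
      · exact absurd hneg (not_lt.2 (by positivity))
    rcases mul_eq_zero.1 this with h | h
    · rw [h, zero_add, ENNReal.zero_rpow_of_pos hp0, zero_add]
    · rw [h, add_zero, ENNReal.zero_rpow_of_pos hp0, add_zero]
  rw [lintegral_congr_ae hae2, lintegral_add_left mfp]

include hf hg hffin hgfin in
theorem aux_case_one (hp0 : 0 < p)
    (hCfin : ∫⁻ x, (f x * g x) ^ (p/2) ∂μ ≠ ∞)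
    (h2C : 2 * ∫⁻ x, (f x * g x) ^ (p/2) ∂μ = (∫⁻ x, f x ^ p ∂μ) + ∫⁻ x, g x ^ p ∂μ) :
    f =ᵐ[μ] g := by
  have mfp : Measurable fun x => f x ^ p := ENNReal.continuous_rpow_const.measurable.comp hf
  have mgp : Measurable fun x => g x ^ p := ENNReal.continuous_rpow_const.measurable.comp hg
  have mC : Measurable fun x => (f x * g x) ^ (p/2) :=
    ENNReal.continuous_rpow_const.measurable.comp (hf.mul hg)
  have ptle : ∀ x, 2 * (f x * g x) ^ (p/2) ≤ f x ^ p + g x ^ p := by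
    intro x
    rw [aux_enn_rpow_ofReal (f x) (hffin x) hp0.le, aux_enn_rpow_ofReal (g x) (hgfin x) hp0.le,
      aux_enn_rpow_ofReal (f x * g x) (ENNReal.mul_ne_top (hffin x) (hgfin x)) (by positivity),
      ENNReal.toReal_mul, ← ENNReal.ofReal_add (by positivity) (by positivity),
      show (2:ℝ≥0∞) = ENNReal.ofReal 2 by simp, ← ENNReal.ofReal_mul (by norm_num)]
    exact ENNReal.ofReal_le_ofReal (aux_real_amgm ENNReal.toReal_nonneg ENNReal.toReal_nonneg)
  have hsub : ∫⁻ x, (f x ^ p + g x ^ p - 2 * (f x * g x) ^ (p/2)) ∂μ = 0 := by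
    rw [lintegral_sub (mC.const_mul 2)
      (by rw [lintegral_const_mul _ mC]; exact ENNReal.mul_ne_top (by simp) hCfin)
      (Filter.Eventually.of_forall ptle), lintegral_const_mul _ mC, lintegral_add_left mfp,
      ← h2C, tsub_self]
  have hae : ∀ᵐ x ∂μ, f x ^ p + g x ^ p - 2 * (f x * g x) ^ (p/2) = 0 :=
    (lintegral_eq_zero_iff ((mfp.add mgp).sub (mC.const_mul 2))).1 hsub
  filter_upwards [hae] with x hx
  have heq : f x ^ p + g x ^ p = 2 * (f x * g x) ^ (p/2) :=
    le_antisymm (tsub_eq_zero_iff_le.1 hx) (ptle x)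
  set a := (f x).toReal with hadef
  set b := (g x).toReal with hbdef
  have ha : 0 ≤ a := ENNReal.toReal_nonneg
  have hb : 0 ≤ b := ENNReal.toReal_nonneg
  have heqr : a ^ p + b ^ p = 2 * (a*b) ^ (p/2) := by
    have := congrArg ENNReal.toReal heq
    rwa [ENNReal.toReal_add (ENNReal.rpow_ne_top_of_nonneg hp0.le (hffin x))
        (ENNReal.rpow_ne_top_of_nonneg hp0.le (hgfin x)),
      ENNReal.toReal_mul, ← ENNReal.toReal_rpow, ← ENNReal.toReal_rpow,
      ← ENNReal.toReal_rpow, ENNReal.toReal_mul,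
      show ((2:ℝ≥0∞)).toReal = 2 by simp] at this
  have hab : a = b := by
    have h1 : (a^(p/2))^2 = a^p := by
      rw [← Real.rpow_natCast (a^(p/2)) 2, ← Real.rpow_mul ha]; norm_num
    have h2 : (b^(p/2))^2 = b^p := by
      rw [← Real.rpow_natCast (b^(p/2)) 2, ← Real.rpow_mul hb]; norm_num
    have hmul : (a*b)^(p/2) = a^(p/2) * b^(p/2) := Real.mul_rpow ha hb
    have heq2 : a^(p/2) = b^(p/2) := by nlinarith [sq_nonneg (a^(p/2) - b^(p/2))]
    have ea : (a^(p/2))^(2/p) = a := by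
      rw [← Real.rpow_mul ha, show (p/2)*(2/p) = 1 by field_simp, Real.rpow_one]
    have eb : (b^(p/2))^(2/p) = b := by
      rw [← Real.rpow_mul hb, show (p/2)*(2/p) = 1 by field_simp, Real.rpow_one]
    rw [← ea, heq2, eb]
  exact (ENNReal.toReal_eq_toReal_iff' (hffin x) (hgfin x)).1 hab

end MeasureAux

/-- Theorem 1 (upper bound), for `p ∈ (0,1] ∪ [2,∞)`:
`‖f+g‖_p^p ≤ (((1+√(1-Γ²))/2)^{1/p} + ((1-√(1-Γ²))/2)^{1/p})^p (‖f‖_p^p + ‖g‖_p^p)`. -/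
theorem statement0
    {X : Type*} [MeasurableSpace X] (μ : Measure X) (p : ℝ)
    (hp : p ∈ Set.Ioc (0 : ℝ) 1 ∪ Set.Ici (2 : ℝ))
    (f g : X → ℝ≥0∞) (hf : Measurable f) (hg : Measurable g)
    (hffin : ∀ x, f x ≠ ∞) (hgfin : ∀ x, g x ≠ ∞)
    (hfp : ∫⁻ x, f x ^ p ∂μ ≠ ∞) (hgp : ∫⁻ x, g x ^ p ∂μ ≠ ∞)
    (hpos : 0 < ∫⁻ x, f x ^ p ∂μ + ∫⁻ x, g x ^ p ∂μ)
    (Γ : ℝ)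
    (hΓ : Γ = 2 * (∫⁻ x, (f x * g x) ^ (p / 2) ∂μ).toReal /
        ((∫⁻ x, f x ^ p ∂μ).toReal + (∫⁻ x, g x ^ p ∂μ).toReal)) :
    ∫⁻ x, (f x + g x) ^ p ∂μ ≤
      ENNReal.ofReal
          ((((1 + Real.sqrt (1 - Γ ^ 2)) / 2) ^ (1 / p) +
            ((1 - Real.sqrt (1 - Γ ^ 2)) / 2) ^ (1 / p)) ^ p) *
        (∫⁻ x, f x ^ p ∂μ + ∫⁻ x, g x ^ p ∂μ) := by
  have hp0 : 0 < p := aux_hp_pos hp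
  have hCle := aux_C_le_AB μ hf hg hffin hgfin hp0
  have hABfin : (∫⁻ x, f x ^ p ∂μ) + (∫⁻ x, g x ^ p ∂μ) ≠ ∞ :=
    ENNReal.add_ne_top.2 ⟨hfp, hgp⟩
  have hCfin : ∫⁻ x, (f x * g x) ^ (p/2) ∂μ ≠ ∞ := by
    apply ne_top_of_le_ne_top hABfin
    calc ∫⁻ x, (f x * g x) ^ (p/2) ∂μ = 1 * ∫⁻ x, (f x * g x) ^ (p/2) ∂μ := (one_mul _).symm
      _ ≤ 2 * ∫⁻ x, (f x * g x) ^ (p/2) ∂μ := mul_le_mul_left one_le_two _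
      _ ≤ _ := hCle
  have hLfin : ∫⁻ x, (f x + g x) ^ p ∂μ ≠ ∞ :=
    ne_top_of_le_ne_top (ENNReal.mul_ne_top ENNReal.ofReal_ne_top hABfin)
      (aux_L_le μ hf hg hffin hgfin hp0)
  have hABtoReal : ((∫⁻ x, f x ^ p ∂μ) + ∫⁻ x, g x ^ p ∂μ).toReal
      = (∫⁻ x, f x ^ p ∂μ).toReal + (∫⁻ x, g x ^ p ∂μ).toReal := ENNReal.toReal_add hfp hgp
  have hABpos : 0 < (∫⁻ x, f x ^ p ∂μ).toReal + (∫⁻ x, g x ^ p ∂μ).toReal := by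
    rw [← hABtoReal]; exact ENNReal.toReal_pos hpos.ne' hABfin
  have hCr2 : 2 * (∫⁻ x, (f x * g x) ^ (p/2) ∂μ).toReal
      ≤ (∫⁻ x, f x ^ p ∂μ).toReal + (∫⁻ x, g x ^ p ∂μ).toReal := by
    have := ENNReal.toReal_mono hABfin hCle
    rwa [ENNReal.toReal_mul, show ((2:ℝ≥0∞)).toReal = 2 by simp, hABtoReal] at this
  have hΓnn : 0 ≤ Γ := by rw [hΓ]; positivity
  have hΓle1 : Γ ≤ 1 := by
    rw [hΓ, div_le_one hABpos]; linarith
  have hsle1 : Real.sqrt (1 - Γ^2) ≤ 1 := by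
    exact Real.sqrt_le_one.2 (by nlinarith [sq_nonneg Γ])
  have hsnn : 0 ≤ Real.sqrt (1 - Γ^2) := Real.sqrt_nonneg _
  have hψnn : 0 ≤ (((1 + Real.sqrt (1 - Γ ^ 2)) / 2) ^ (1 / p) +
      ((1 - Real.sqrt (1 - Γ ^ 2)) / 2) ^ (1 / p)) ^ p :=
    Real.rpow_nonneg (add_nonneg (Real.rpow_nonneg (by linarith) _)
      (Real.rpow_nonneg (by linarith) _)) _
  rw [← ENNReal.ofReal_toReal hLfin, ← ENNReal.ofReal_toReal hABfin,
    ← ENNReal.ofReal_mul hψnn]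
  apply ENNReal.ofReal_le_ofReal
  rw [hABtoReal]
  -- now a real inequality
  rcases eq_or_lt_of_le hΓnn with hΓ0 | hΓpos
  · -- Γ = 0
    have hCr0 : (∫⁻ x, (f x * g x) ^ (p/2) ∂μ).toReal = 0 := by
      rw [hΓ] at hΓ0
      have := hΓ0.symm
      rw [div_eq_zero_iff] at this
      rcases this with h | h
      · linarith [h]
      · linarith
    have hC0 : ∫⁻ x, (f x * g x) ^ (p/2) ∂μ = 0 := by
      rw [← ENNReal.ofReal_toReal hCfin, hCr0]; simp
    have hLr := aux_case_zero μ hf hg hp0 hC0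
    rw [hLr, hABtoReal]
    have hψ1 : (((1 + Real.sqrt (1 - Γ ^ 2)) / 2) ^ (1 / p) +
        ((1 - Real.sqrt (1 - Γ ^ 2)) / 2) ^ (1 / p)) ^ p = 1 := by
      rw [← hΓ0, show (1:ℝ) - 0^2 = 1 by norm_num, Real.sqrt_one,
        show ((1:ℝ)+1)/2 = 1 by norm_num, show ((1:ℝ)-1)/2 = 0 by norm_num,
        Real.one_rpow, Real.zero_rpow (one_div_ne_zero hp0.ne'), add_zero, Real.one_rpow]
    rw [hψ1, one_mul]
  · rcases eq_or_lt_of_le hΓle1 with hΓ1 | hΓlt1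
    · -- Γ = 1
      have h2Cr : 2 * (∫⁻ x, (f x * g x) ^ (p/2) ∂μ).toReal
          = (∫⁻ x, f x ^ p ∂μ).toReal + (∫⁻ x, g x ^ p ∂μ).toReal := by
        rw [hΓ] at hΓ1
        field_simp at hΓ1
        linarith
      have h2C : 2 * ∫⁻ x, (f x * g x) ^ (p/2) ∂μ
          = (∫⁻ x, f x ^ p ∂μ) + ∫⁻ x, g x ^ p ∂μ := by
        apply (ENNReal.toReal_eq_toReal_iff'
          (ENNReal.mul_ne_top (by simp) hCfin) hABfin).1
        rw [ENNReal.toReal_mul, show ((2:ℝ≥0∞)).toReal = 2 by simp, hABtoReal]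
        exact h2Cr
      have hfg := aux_case_one μ hf hg hffin hgfin hp0 hCfin h2C
      have mfp : Measurable fun x => f x ^ p := ENNReal.continuous_rpow_const.measurable.comp hf
      have hBA : ∫⁻ x, g x ^ p ∂μ = ∫⁻ x, f x ^ p ∂μ :=
        lintegral_congr_ae (hfg.mono fun x hx => by
          show g x ^ p = f x ^ p
          rw [hx])
      have hL2 : ∫⁻ x, (f x + g x) ^ p ∂μ = (2:ℝ≥0∞)^p * ∫⁻ x, f x ^ p ∂μ := by
        have hptw : (fun x => (f x + g x)^p) =ᵐ[μ] fun x => (2:ℝ≥0∞)^p * f x ^ p :=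
          hfg.mono fun x hx => by
            show (f x + g x) ^ p = (2:ℝ≥0∞)^p * f x ^ p
            rw [← hx, ← two_mul, ENNReal.mul_rpow_of_nonneg _ _ hp0.le]
        rw [lintegral_congr_ae hptw, lintegral_const_mul _ mfp]
      rw [hL2, hBA, ENNReal.toReal_mul, ← ENNReal.toReal_rpow,
        show ((2:ℝ≥0∞)).toReal = 2 by simp]
      have hψval : (((1 + Real.sqrt (1 - Γ ^ 2)) / 2) ^ (1 / p) +
          ((1 - Real.sqrt (1 - Γ ^ 2)) / 2) ^ (1 / p)) ^ p = 2^p * (1/2) := by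
        rw [hΓ1, show (1:ℝ) - 1^2 = 0 by norm_num, Real.sqrt_zero,
          show ((1:ℝ)+0)/2 = 1/2 by norm_num, show ((1:ℝ)-0)/2 = 1/2 by norm_num]
        rw [show ((1:ℝ)/2)^(1/p) + ((1:ℝ)/2)^(1/p) = 2*((1:ℝ)/2)^(1/p) by ring,
          Real.mul_rpow (by norm_num) (Real.rpow_nonneg (by norm_num) _),
          ← Real.rpow_mul (by norm_num : (0:ℝ) ≤ 1/2),
          show 1/p*p = 1 by field_simp, Real.rpow_one]
      rw [hψval]
      apply le_of_eq
      ring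
    · -- 0 < Γ < 1 : main case
      obtain ⟨θ₀, hθ₀pos, htan⟩ := aux_tangency hp0 hΓpos hΓlt1
      have ha : (0:ℝ) ≤ (2^p * (Real.cosh θ₀ ^ (p-1) * Real.sinh θ₀ / Real.sinh (p*θ₀)))/2 := by
        linarith [aux_half_m_ge_one hp hθ₀pos]
      have key := aux_integral_step μ hf hg hffin hgfin hp0 hfp hgp hCfin hLfin ha
        (fun u v hu hv => aux_twovar hp hθ₀pos hu hv)
      have hCr : (∫⁻ x, (f x * g x) ^ (p/2) ∂μ).toReal
          = Γ * ((∫⁻ x, f x ^ p ∂μ).toReal + (∫⁻ x, g x ^ p ∂μ).toReal) / 2 := by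
        rw [hΓ]; field_simp
      rw [hCr] at key
      have hexp := congrArg (fun t => t * ((∫⁻ x, f x ^ p ∂μ).toReal
        + (∫⁻ x, g x ^ p ∂μ).toReal)) htan
      nlinarith [key, hexp]
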